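/- Let G′ ⊆ ℂ×ℂ be open and let η₁, η₂ : ℂ×ℂ → ℂ be ℂ-differentiable on G′. Define φₖ(a,b) = ηₖ(a, conj b) (so each φₖ is holomorphic in a and conjugate holomorphic in b), and let Ψ be the associated quaternionic function of (φ₁,φ₂). Then Ψ is regular: Fueter's equation ∂Ψ/∂x + i·∂Ψ/∂y + j·∂Ψ/∂z + k·∂Ψ/∂u = 0 holds at every point (x,y,z,u) with (x+iy, z−iu) ∈ G′. -/

import Mathlib

/-- The quaternionic function associated with a pair of complex functions:
`Ψ(x,y,z,u) = Re φ₁ + (Im φ₁)i + (Re φ₂)j + (Im φ₂)k`, the argument being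
`(x+iy, z+iu) ∈ ℂ × ℂ`. -/
noncomputable def quatFn (φ₁ φ₂ : ℂ × ℂ → ℂ) (p : ℂ × ℂ) : Quaternion ℝ :=
  ⟨(φ₁ p).re, (φ₁ p).im, (φ₂ p).re, (φ₂ p).im⟩

/-- The quaternion unit `i`. -/
noncomputable def qI : Quaternion ℝ := ⟨0, 1, 0, 0⟩
/-- The quaternion unit `j`. -/
noncomputable def qJ : Quaternion ℝ := ⟨0, 0, 1, 0⟩
/-- The quaternion unit `k`. -/
noncomputable def qK : Quaternion ℝ := ⟨0, 0, 0, 1⟩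

/-- Conjugate the second coordinate, as a real-linear map. -/
noncomputable def conj2 : (ℂ × ℂ) →L[ℝ] (ℂ × ℂ) :=
  (ContinuousLinearMap.id ℝ ℂ).prodMap
    (Complex.conjCLE : ℂ ≃L[ℝ] ℂ).toContinuousLinearMap

lemma conj2_apply (p : ℂ × ℂ) : conj2 p = (p.1, (starRingEnd ℂ) p.2) := rfl

@[simp] lemma qI_re : qI.re = 0 := rfl
@[simp] lemma qI_imI : qI.imI = 1 := rfl
@[simp] lemma qI_imJ : qI.imJ = 0 := rfl
@[simp] lemma qI_imK : qI.imK = 0 := rfl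
@[simp] lemma qJ_re : qJ.re = 0 := rfl
@[simp] lemma qJ_imI : qJ.imI = 0 := rfl
@[simp] lemma qJ_imJ : qJ.imJ = 1 := rfl
@[simp] lemma qJ_imK : qJ.imK = 0 := rfl
@[simp] lemma qK_re : qK.re = 0 := rfl
@[simp] lemma qK_imI : qK.imI = 0 := rfl
@[simp] lemma qK_imJ : qK.imJ = 0 := rfl
@[simp] lemma qK_imK : qK.imK = 1 := rfl

theorem coanalytic_implies_regular (G' : Set (ℂ × ℂ)) (hG' : IsOpen G')
    (η₁ η₂ : ℂ × ℂ → ℂ)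
    (hd₁ : ∀ q ∈ G', DifferentiableAt ℂ η₁ q)
    (hd₂ : ∀ q ∈ G', DifferentiableAt ℂ η₂ q)
    (φ₁ φ₂ : ℂ × ℂ → ℂ)
    (hφ₁ : ∀ a b : ℂ, φ₁ (a, b) = η₁ (a, (starRingEnd ℂ) b))
    (hφ₂ : ∀ a b : ℂ, φ₂ (a, b) = η₂ (a, (starRingEnd ℂ) b))
    (Ψ : ℂ × ℂ → Quaternion ℝ) (hΨ : Ψ = quatFn φ₁ φ₂) :
    ∀ x y z u : ℝ,
      ((x + y * Complex.I, z - u * Complex.I) : ℂ × ℂ) ∈ G' →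
      fderiv ℝ Ψ (x + y * Complex.I, z + u * Complex.I) (1, 0) +
        qI * fderiv ℝ Ψ (x + y * Complex.I, z + u * Complex.I) (Complex.I, 0) +
        qJ * fderiv ℝ Ψ (x + y * Complex.I, z + u * Complex.I) (0, 1) +
        qK * fderiv ℝ Ψ (x + y * Complex.I, z + u * Complex.I) (0, Complex.I) = 0 := by
  intro x y z u hq
  set q₀ : ℂ × ℂ := (x + y * Complex.I, z + u * Complex.I) with hq₀
  set qc : ℂ × ℂ := (x + y * Complex.I, z - u * Complex.I) with hqc
  have hσq : conj2 q₀ = qc := by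
    rw [conj2_apply]
    simp [hq₀, hqc, Prod.ext_iff, Complex.ext_iff]
  set D₁ := fderiv ℂ η₁ qc with hD₁
  set D₂ := fderiv ℂ η₂ qc with hD₂
  have h1 : HasFDerivAt η₁ D₁ qc := (hd₁ qc hq).hasFDerivAt
  have h2 : HasFDerivAt η₂ D₂ qc := (hd₂ qc hq).hasFDerivAt
  set M₁ : (ℂ × ℂ) →L[ℝ] ℂ := (D₁.restrictScalars ℝ).comp conj2 with hM₁
  set M₂ : (ℂ × ℂ) →L[ℝ] ℂ := (D₂.restrictScalars ℝ).comp conj2 with hM₂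
  have hc2 : HasFDerivAt conj2 (conj2 : (ℂ × ℂ) →L[ℝ] (ℂ × ℂ)) q₀ :=
    conj2.hasFDerivAt
  have h1' : HasFDerivAt η₁ (D₁.restrictScalars ℝ) (conj2 q₀) := by
    rw [hσq]; exact h1.restrictScalars ℝ
  have h2' : HasFDerivAt η₂ (D₂.restrictScalars ℝ) (conj2 q₀) := by
    rw [hσq]; exact h2.restrictScalars ℝ
  have hη₁ : HasFDerivAt (fun p => η₁ (conj2 p)) M₁ q₀ := h1'.comp q₀ hc2
  have hη₂ : HasFDerivAt (fun p => η₂ (conj2 p)) M₂ q₀ := h2'.comp q₀ hc2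
  have hre1 : HasFDerivAt (fun p => (η₁ (conj2 p)).re • (1 : Quaternion ℝ))
      ((Complex.reCLM.comp M₁).smulRight (1 : Quaternion ℝ)) q₀ :=
    (Complex.reCLM.hasFDerivAt.comp q₀ hη₁).smul_const _
  have him1 : HasFDerivAt (fun p => (η₁ (conj2 p)).im • qI)
      ((Complex.imCLM.comp M₁).smulRight qI) q₀ :=
    (Complex.imCLM.hasFDerivAt.comp q₀ hη₁).smul_const _
  have hre2 : HasFDerivAt (fun p => (η₂ (conj2 p)).re • qJ)
      ((Complex.reCLM.comp M₂).smulRight qJ) q₀ :=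
    (Complex.reCLM.hasFDerivAt.comp q₀ hη₂).smul_const _
  have him2 : HasFDerivAt (fun p => (η₂ (conj2 p)).im • qK)
      ((Complex.imCLM.comp M₂).smulRight qK) q₀ :=
    (Complex.imCLM.hasFDerivAt.comp q₀ hη₂).smul_const _
  have hΨ' : Ψ = fun p => (η₁ (conj2 p)).re • (1 : Quaternion ℝ)
      + (η₁ (conj2 p)).im • qI + (η₂ (conj2 p)).re • qJ + (η₂ (conj2 p)).im • qK := by
    funext p
    have e1 : φ₁ p = η₁ (conj2 p) := by rw [conj2_apply]; exact hφ₁ p.1 p.2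
    have e2 : φ₂ p = η₂ (conj2 p) := by rw [conj2_apply]; exact hφ₂ p.1 p.2
    rw [hΨ]
    simp only [quatFn, e1, e2]
    ext <;> simp [Quaternion.re_one, Quaternion.imI_one, Quaternion.imJ_one, Quaternion.imK_one]
  set Dtot : (ℂ × ℂ) →L[ℝ] Quaternion ℝ :=
    ((Complex.reCLM.comp M₁).smulRight (1 : Quaternion ℝ)
      + (Complex.imCLM.comp M₁).smulRight qI)
      + (Complex.reCLM.comp M₂).smulRight qJ
      + (Complex.imCLM.comp M₂).smulRight qK with hDtot
  have hD : HasFDerivAt Ψ Dtot q₀ := by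
    rw [hΨ']
    exact ((hre1.add him1).add hre2).add him2
  rw [hD.fderiv]
  have appD : ∀ v : ℂ × ℂ, Dtot v = (M₁ v).re • (1 : Quaternion ℝ)
      + (M₁ v).im • qI + (M₂ v).re • qJ + (M₂ v).im • qK := by
    intro v
    simp [hDtot, ContinuousLinearMap.add_apply, ContinuousLinearMap.smulRight_apply]
  have appM : ∀ (M : (ℂ × ℂ) →L[ℂ] ℂ) (v : ℂ × ℂ),
      ((M.restrictScalars ℝ).comp conj2) v = M (v.1, (starRingEnd ℂ) v.2) := by
    intro M v; rfl
  have lin : ∀ (M : (ℂ × ℂ) →L[ℂ] ℂ) (c : ℂ) (v : ℂ × ℂ), M (c • v) = c * M v := by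
    intro M c v; rw [map_smul]; rfl
  have eI1 : M₁ (Complex.I, 0) = Complex.I * D₁ (1, 0) := by
    rw [hM₁, appM]
    have : ((Complex.I : ℂ), (starRingEnd ℂ) 0) = Complex.I • ((1 : ℂ), (0 : ℂ)) := by
      simp [Prod.ext_iff]
    rw [this, lin]
  have eI2 : M₂ (Complex.I, 0) = Complex.I * D₂ (1, 0) := by
    rw [hM₂, appM]
    have : ((Complex.I : ℂ), (starRingEnd ℂ) 0) = Complex.I • ((1 : ℂ), (0 : ℂ)) := by
      simp [Prod.ext_iff]
    rw [this, lin]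
  have eJ1 : M₁ (0, Complex.I) = -Complex.I * D₁ (0, 1) := by
    rw [hM₁, appM]
    have : ((0 : ℂ), (starRingEnd ℂ) Complex.I) = (-Complex.I) • ((0 : ℂ), (1 : ℂ)) := by
      simp [Prod.ext_iff, Complex.conj_I]
    rw [this, lin]
  have eJ2 : M₂ (0, Complex.I) = -Complex.I * D₂ (0, 1) := by
    rw [hM₂, appM]
    have : ((0 : ℂ), (starRingEnd ℂ) Complex.I) = (-Complex.I) • ((0 : ℂ), (1 : ℂ)) := by
      simp [Prod.ext_iff, Complex.conj_I]
    rw [this, lin]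
  have e11 : M₁ (1, 0) = D₁ (1, 0) := by
    rw [hM₁, appM]; simp
  have e12 : M₂ (1, 0) = D₂ (1, 0) := by
    rw [hM₂, appM]; simp
  have e21 : M₁ (0, 1) = D₁ (0, 1) := by
    rw [hM₁, appM]; simp
  have e22 : M₂ (0, 1) = D₂ (0, 1) := by
    rw [hM₂, appM]; simp
  rw [appD, appD, appD, appD, e11, e12, e21, e22, eI1, eI2, eJ1, eJ2]
  set A₁ := D₁ (1, 0)
  set A₂ := D₂ (1, 0)
  set B₁ := D₁ (0, 1)
  set B₂ := D₂ (0, 1)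
  ext <;>
    simp [Quaternion.re_mul, Quaternion.imI_mul, Quaternion.imJ_mul,
      Quaternion.imK_mul, Quaternion.re_one, Quaternion.imI_one, Quaternion.imJ_one, Quaternion.imK_one, Quaternion.re_zero, Quaternion.imI_zero,
      Quaternion.imJ_zero, Quaternion.imK_zero, Complex.mul_re, Complex.mul_im] <;>
    ring
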